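/- Let v be an XOS valuation with binary marginals, n ≥ 1 agents, MMS the maximin share value, and APS the AnyPrice share defined via the price-based characterization: APS = min over price vectors p with total price 1 of the maximum value of any bundle with price at most 1/n. Then APS ≤ 2·MMS + 1. -/

import Mathlib

open Finset

/-- `v` is an XOS valuation: pointwise maximum of a nonempty family of
additive (nonnegative) functions. -/
def IsXOS (m : ℕ) (v : Finset (Fin m) → ℝ) : Prop :=
  ∃ F : Set (Fin m → ℝ), F.Nonempty ∧ (∀ f ∈ F, ∀ g, 0 ≤ f g) ∧
    (∀ S : Finset (Fin m), ∃ f ∈ F, v S = ∑ g ∈ S, f g) ∧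
    (∀ f ∈ F, ∀ S : Finset (Fin m), ∑ g ∈ S, f g ≤ v S)

/-- `v` has binary marginals: adding any good changes the value by 0 or 1. -/
def BinaryMarginals (m : ℕ) (v : Finset (Fin m) → ℝ) : Prop :=
  ∀ S : Finset (Fin m), ∀ g : Fin m,
    v (insert g S) - v S = 0 ∨ v (insert g S) - v S = 1

/-- `A` is a partition of the goods `[m]` into `n` (possibly empty) bundles. -/
def IsPartition (m n : ℕ) (A : Fin n → Finset (Fin m)) : Prop :=
  (∀ i j : Fin n, i ≠ j → Disjoint (A i) (A j)) ∧
    Finset.univ.biUnion A = (Finset.univ : Finset (Fin m))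

/-- `μ` is the maximin share of `v` over `n` agents: the maximum over all
partitions into `n` bundles of the minimum bundle value. -/
def IsMMS (m n : ℕ) (v : Finset (Fin m) → ℝ) (μ : ℝ) : Prop :=
  (∃ A : Fin n → Finset (Fin m), IsPartition m n A ∧ ∀ j, μ ≤ v (A j)) ∧
  (∀ A : Fin n → Finset (Fin m), IsPartition m n A → ∃ j, v (A j) ≤ μ)

/-- `a` is the AnyPrice share (price-based): the minimum over nonnegative
price vectors of total price 1 of the maximum value of a bundle of price
at most `1/n`. -/
def IsAPS (m n : ℕ) (v : Finset (Fin m) → ℝ) (a : ℝ) : Prop :=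
  (∃ p : Fin m → ℝ, (∀ g, 0 ≤ p g) ∧ (∑ g, p g = 1) ∧
    ∀ S : Finset (Fin m), (∑ g ∈ S, p g) ≤ 1 / n → v S ≤ a) ∧
  (∀ p : Fin m → ℝ, (∀ g, 0 ≤ p g) → (∑ g, p g = 1) →
    ∃ S : Finset (Fin m), (∑ g ∈ S, p g) ≤ 1 / n ∧ a ≤ v S)


section AuxLemmas

variable {m : ℕ} {v : Finset (Fin m) → ℝ}

lemma xos_empty (hxos : IsXOS m v) : v ∅ = 0 := by
  obtain ⟨F, _, _, h3, _⟩ := hxos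
  obtain ⟨f, _, hf⟩ := h3 ∅
  simpa using hf

lemma bm_le_card (hxos : IsXOS m v) (hbm : BinaryMarginals m v) (S : Finset (Fin m)) :
    v S ≤ S.card := by
  induction S using Finset.induction with
  | empty => simp [xos_empty hxos]
  | @insert a s ha ih =>
    rcases hbm s a with hh | hh <;> rw [card_insert_of_notMem ha] <;> push_cast <;> linarith

lemma bm_nat (hxos : IsXOS m v) (hbm : BinaryMarginals m v) (S : Finset (Fin m)) :
    ∃ k : ℕ, v S = k := by
  induction S using Finset.induction with
  | empty => exact ⟨0, by simp [xos_empty hxos]⟩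
  | @insert a s ha ih =>
    obtain ⟨k, hk⟩ := ih
    rcases hbm s a with hh | hh
    · exact ⟨k, by linarith⟩
    · exact ⟨k + 1, by push_cast; linarith⟩

lemma bm_mono_union (hbm : BinaryMarginals m v) (s t : Finset (Fin m)) :
    v s ≤ v (s ∪ t) := by
  induction t using Finset.induction with
  | empty => simp
  | @insert a u ha ih =>
    rw [Finset.union_insert]
    rcases hbm (s ∪ u) a with hh | hh <;> linarith

lemma bm_mono (hbm : BinaryMarginals m v) {s t : Finset (Fin m)} (h : s ⊆ t) :
    v s ≤ v t := by
  have := bm_mono_union hbm s t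
  rwa [Finset.union_eq_right.mpr h] at this

lemma xos_nonneg (hxos : IsXOS m v) (S : Finset (Fin m)) : 0 ≤ v S := by
  obtain ⟨F, _, hnn, h3, _⟩ := hxos
  obtain ⟨f, hfF, hf⟩ := h3 S
  rw [hf]
  exact Finset.sum_nonneg fun g _ => hnn f hfF g

lemma xos_subadd (hxos : IsXOS m v) (s t : Finset (Fin m)) :
    v (s ∪ t) ≤ v s + v t := by
  obtain ⟨F, _, hnn, h3, h4⟩ := hxos
  obtain ⟨f, hfF, hf⟩ := h3 (s ∪ t)
  have h1 : ∑ g ∈ s ∪ t, f g ≤ ∑ g ∈ s, f g + ∑ g ∈ t, f g := by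
    have h2 := Finset.sum_union_inter (s₁ := s) (s₂ := t) (f := f)
    have h5 : (0:ℝ) ≤ ∑ g ∈ s ∩ t, f g := Finset.sum_nonneg fun g _ => hnn f hfF g
    linarith
  calc v (s ∪ t) = ∑ g ∈ s ∪ t, f g := hf
    _ ≤ ∑ g ∈ s, f g + ∑ g ∈ t, f g := h1
    _ ≤ v s + v t := add_le_add (h4 f hfF s) (h4 f hfF t)

lemma bm_singleton_le_one (hxos : IsXOS m v) (hbm : BinaryMarginals m v) (g : Fin m) :
    v {g} ≤ 1 := by
  have := hbm ∅ g
  rw [xos_empty hxos] at this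
  rcases this with hh | hh <;> simp only [LawfulSingleton.insert_empty_eq] at hh <;> linarith

/-- From any set of value at least `h ≥ 1`, one can extract a subset of value
exactly `h` consisting of exactly `h` goods. -/
lemma xos_extract (hxos : IsXOS m v) (hbm : BinaryMarginals m v) (h : ℕ) (hh : 1 ≤ h) :
    ∀ R : Finset (Fin m), (h : ℝ) ≤ v R → ∃ T, T ⊆ R ∧ v T = (h : ℝ) ∧ T.card = h := by
  intro R
  induction R using Finset.strongInduction with
  | _ R ih =>
    intro hR
    by_cases hex : ∃ g ∈ R, (h : ℝ) ≤ v (R.erase g)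
    · obtain ⟨g, hg, hvg⟩ := hex
      obtain ⟨T, hT, hvT, hcT⟩ := ih (R.erase g) (Finset.erase_ssubset hg) hvg
      exact ⟨T, hT.trans (Finset.erase_subset _ _), hvT, hcT⟩
    · push_neg at hex
      have hRne : R.Nonempty := by
        rcases R.eq_empty_or_nonempty with rfl | h'
        · rw [xos_empty hxos] at hR
          have : (1:ℝ) ≤ (h:ℝ) := by exact_mod_cast hh
          linarith
        · exact h'
      have key : ∀ g ∈ R, v (R.erase g) ≤ (h : ℝ) - 1 := by
        intro g hg
        obtain ⟨k, hk⟩ := bm_nat hxos hbm (R.erase g)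
        have h1 := hex g hg
        rw [hk] at h1 ⊢
        have : k < h := by exact_mod_cast h1
        have : k + 1 ≤ h := this
        have : (k:ℝ) + 1 ≤ (h:ℝ) := by exact_mod_cast this
        linarith
      obtain ⟨g0, hg0⟩ := hRne
      have hvR : v R = h := by
        have h1 := hbm (R.erase g0) g0
        rw [Finset.insert_erase hg0] at h1
        have h2 := key g0 hg0
        rcases h1 with h1 | h1 <;> linarith
      obtain ⟨F, _, hnn, h3, h4⟩ := hxos
      obtain ⟨f, hfF, hf⟩ := h3 R
      have hf1 : ∀ g ∈ R, f g = 1 := by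
        intro g hg
        have hle : f g ≤ 1 := by
          have h5 := h4 f hfF {g}
          simp only [Finset.sum_singleton] at h5
          have h6 := bm_singleton_le_one ⟨F, ⟨f, hfF⟩, hnn, h3, h4⟩ hbm g
          linarith
        have hge : 1 ≤ f g := by
          have hsum : ∑ x ∈ R.erase g, f x ≤ v (R.erase g) := h4 f hfF _
          have hsplit : f g + ∑ x ∈ R.erase g, f x = v R := by
            rw [hf, Finset.add_sum_erase _ f hg]
          have h7 := key g hg
          linarith
        linarith
      have hcard : (R.card : ℝ) = (h : ℝ) := by
        have : v R = ∑ g ∈ R, (1:ℝ) := by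
          rw [hf]; exact Finset.sum_congr rfl hf1
        rw [hvR] at this
        simpa using this.symm
      exact ⟨R, subset_rfl, hvR, by exact_mod_cast hcard⟩

end AuxLemmas

theorem xos_aps_le_two_mms_add_one {m n : ℕ} (v : Finset (Fin m) → ℝ)
    (hxos : IsXOS m v) (hbm : BinaryMarginals m v) (hn : 1 ≤ n)
    (μ a : ℝ) (hmms : IsMMS m n v μ) (haps : IsAPS m n v a) :
    a ≤ 2 * μ + 1 := by
  obtain ⟨⟨A₀, hA₀p, hA₀⟩, hub⟩ := hmms
  obtain ⟨j₀, hj₀⟩ := hub A₀ hA₀p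
  obtain ⟨mu0, hμn⟩ := bm_nat hxos hbm (A₀ j₀)
  have hμ : μ = (mu0 : ℝ) := by
    have := hA₀ j₀
    rw [hμn] at hj₀ this
    linarith
  -- greedy extraction of disjoint (mu0+1)-sets
  have key : ∀ k : ℕ,
      (∃ 𝒜 : Finset (Finset (Fin m)), 𝒜.card = k ∧
        (∀ s ∈ 𝒜, ∀ t ∈ 𝒜, s ≠ t → Disjoint s t) ∧
        (∀ s ∈ 𝒜, (mu0 : ℝ) + 1 ≤ v s ∧ s.card = mu0 + 1)) ∨
      (∃ U : Finset (Fin m), (∃ j, j < k ∧ U.card = j * (mu0 + 1)) ∧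
        v (univ \ U) ≤ (mu0 : ℝ)) := by
    intro k
    induction k with
    | zero => exact Or.inl ⟨∅, by simp⟩
    | succ k ih =>
      rcases ih with ⟨𝒜, hcard, hdisj, hprop⟩ | ⟨U, ⟨j, hj, hUc⟩, hrem⟩
      · set U := 𝒜.biUnion id with hUdef
        have hUcard : U.card = k * (mu0 + 1) := by
          have h0 : U.card = ∑ s ∈ 𝒜, (id s).card := Finset.card_biUnion hdisj
          rw [h0]
          calc ∑ s ∈ 𝒜, (id s).card = ∑ _s ∈ 𝒜, (mu0 + 1) :=
                Finset.sum_congr rfl (fun s hs => (hprop s hs).2)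
            _ = k * (mu0 + 1) := by rw [Finset.sum_const, smul_eq_mul, hcard]
        by_cases hbig : (mu0 : ℝ) + 1 ≤ v (univ \ U)
        · have hcast : ((mu0 + 1 : ℕ) : ℝ) ≤ v (univ \ U) := by push_cast; linarith
          obtain ⟨T, hTsub, hvT, hcT⟩ :=
            xos_extract hxos hbm (mu0 + 1) (by omega) (univ \ U) hcast
          have hTdisj : ∀ s ∈ 𝒜, Disjoint T s := by
            intro s hs
            refine Finset.disjoint_left.mpr fun g hgT hgs => ?_
            exact (Finset.mem_sdiff.mp (hTsub hgT)).2
              (Finset.mem_biUnion.mpr ⟨s, hs, hgs⟩)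
          have hTne : T.Nonempty := by
            rw [← Finset.card_pos, hcT]; omega
          have hTnm : T ∉ 𝒜 := by
            intro hmem
            obtain ⟨g, hg⟩ := hTne
            exact (Finset.disjoint_left.mp (hTdisj T hmem) hg) hg
          refine Or.inl ⟨insert T 𝒜, ?_, ?_, ?_⟩
          · rw [Finset.card_insert_of_notMem hTnm, hcard]
          · intro s hs t ht hst
            have hs' := Finset.mem_insert.mp hs
            have ht' := Finset.mem_insert.mp ht
            rcases hs' with hsT | hsA
            · rcases ht' with htT | htA
              · exact absurd (hsT.trans htT.symm) hst
              · subst hsT; exact hTdisj t htA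
            · rcases ht' with htT | htA
              · subst htT; exact (hTdisj s hsA).symm
              · exact hdisj s hsA t htA hst
          · intro s hs
            rcases Finset.mem_insert.mp hs with rfl | hs
            · refine ⟨by rw [hvT]; push_cast; linarith, hcT⟩
            · exact hprop s hs
        · push_neg at hbig
          refine Or.inr ⟨U, ⟨k, Nat.lt_succ_self k, hUcard⟩, ?_⟩
          obtain ⟨r, hr⟩ := bm_nat hxos hbm (univ \ U)
          rw [hr] at hbig ⊢
          have : r < mu0 + 1 := by exact_mod_cast hbig
          exact_mod_cast Nat.lt_succ_iff.mp this
      · exact Or.inr ⟨U, ⟨j, Nat.lt_succ_of_lt hj, hUc⟩, hrem⟩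
  rcases key n with ⟨𝒜, hcard, hdisj, hprop⟩ | ⟨U, ⟨j, hj, hUc⟩, hrem⟩
  · -- n disjoint high-value sets: contradiction with MMS upper bound
    exfalso
    set rem : Finset (Fin m) := univ \ 𝒜.biUnion id with hremdef
    set i0 : Fin n := ⟨0, hn⟩ with hi0
    set F : Fin n → Finset (Fin m) :=
      fun i => ((𝒜.equivFin.symm (Fin.cast hcard.symm i) : { x // x ∈ 𝒜 }) :
        Finset (Fin m)) with hF
    have hFmem : ∀ i, F i ∈ 𝒜 := fun i => (𝒜.equivFin.symm (Fin.cast hcard.symm i)).2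
    have hFinj : Function.Injective F := by
      intro i j hij
      have := Subtype.ext hij
      have h2 := 𝒜.equivFin.symm.injective this
      have h3 := congrArg Fin.val h2
      exact Fin.ext (by simpa using h3)
    have hFsurj : ∀ s ∈ 𝒜, ∃ i, F i = s := by
      intro s hs
      refine ⟨Fin.cast hcard (𝒜.equivFin ⟨s, hs⟩), ?_⟩
      show ((𝒜.equivFin.symm (Fin.cast hcard.symm
        (Fin.cast hcard (𝒜.equivFin ⟨s, hs⟩))) : { x // x ∈ 𝒜 }) : Finset (Fin m)) = s
      have h9 : Fin.cast hcard.symm (Fin.cast hcard (𝒜.equivFin ⟨s, hs⟩)) =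
          𝒜.equivFin ⟨s, hs⟩ := rfl
      rw [h9, Equiv.symm_apply_apply]
    have hFrem : ∀ i, Disjoint (F i) rem := by
      intro i
      refine Finset.disjoint_left.mpr fun g hg hgrem => ?_
      exact (Finset.mem_sdiff.mp hgrem).2
        (Finset.mem_biUnion.mpr ⟨F i, hFmem i, hg⟩)
    set A : Fin n → Finset (Fin m) :=
      fun i => F i ∪ (if i = i0 then rem else ∅) with hA
    have hApart : IsPartition m n A := by
      constructor
      · intro i j hij
        have hFd : Disjoint (F i) (F j) :=
          hdisj (F i) (hFmem i) (F j) (hFmem j) (fun h => hij (hFinj h))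
        rw [hA]
        simp only
        refine Finset.disjoint_union_left.mpr ⟨Finset.disjoint_union_right.mpr
          ⟨hFd, ?_⟩, Finset.disjoint_union_right.mpr ⟨?_, ?_⟩⟩
        · by_cases hj' : j = i0 <;> simp [hj', hFrem i]
        · by_cases hi' : i = i0 <;> simp [hi', (hFrem j).symm]
        · by_cases hi' : i = i0
          · have hj' : ¬ (j = i0) := fun h => hij (h ▸ hi')
            simp [hj']
          · simp [hi']
      · apply Finset.Subset.antisymm (Finset.subset_univ _)
        intro g _
        rw [Finset.mem_biUnion]
        by_cases hg : g ∈ 𝒜.biUnion id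
        · obtain ⟨s, hs, hgs⟩ := Finset.mem_biUnion.mp hg
          obtain ⟨i, hFi⟩ := hFsurj s hs
          exact ⟨i, Finset.mem_univ i, Finset.mem_union_left _ (hFi ▸ hgs)⟩
        · refine ⟨i0, Finset.mem_univ i0, Finset.mem_union_right _ ?_⟩
          simp only [if_pos rfl]
          exact Finset.mem_sdiff.mpr ⟨Finset.mem_univ g, hg⟩
    obtain ⟨j', hj'⟩ := hub A hApart
    have h1 : (mu0 : ℝ) + 1 ≤ v (F j') := (hprop (F j') (hFmem j')).1
    have h2 : v (F j') ≤ v (A j') := bm_mono hbm (Finset.subset_union_left)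
    rw [hμ] at hj'
    linarith
  · -- price the union U uniformly
    rcases Nat.eq_zero_or_pos U.card with hU0 | hUpos
    · -- U empty: all sets have value at most mu0; use the price from haps.1
      obtain ⟨p, hp0, hp1, _⟩ := haps.1
      obtain ⟨S, _, haS⟩ := haps.2 p hp0 hp1
      have hSsub : S ⊆ univ \ U := by
        rw [Finset.card_eq_zero.mp hU0]
        simpa using Finset.subset_univ S
      have : v S ≤ (mu0 : ℝ) := le_trans (bm_mono hbm hSsub) hrem
      rw [hμ]
      have : (0:ℝ) ≤ (mu0 : ℝ) := Nat.cast_nonneg _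
      linarith [le_trans haS (le_trans (bm_mono hbm hSsub) hrem)]
    · set q : Fin m → ℝ := fun g => if g ∈ U then ((U.card : ℝ))⁻¹ else 0 with hq
      have hUcR : (0:ℝ) < (U.card : ℝ) := by exact_mod_cast hUpos
      have hq0 : ∀ g, 0 ≤ q g := by
        intro g; rw [hq]; dsimp only
        split <;> positivity
      have hqsum : ∀ s : Finset (Fin m), ∑ g ∈ s, q g = ((s ∩ U).card : ℝ) * (U.card : ℝ)⁻¹ := by
        intro s
        rw [hq]
        simp only
        rw [Finset.sum_ite_mem, Finset.sum_const, nsmul_eq_mul]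
      have hq1 : ∑ g, q g = 1 := by
        rw [hqsum, Finset.univ_inter, mul_inv_cancel₀ (ne_of_gt hUcR)]
      obtain ⟨S, hScheap, haS⟩ := haps.2 q hq0 hq1
      rw [hqsum] at hScheap
      set c : ℕ := (S ∩ U).card with hc
      have hnR : (0:ℝ) < (n : ℝ) := by exact_mod_cast hn
      -- (c : ℝ) / U.card ≤ 1 / n  ⇒  c * n ≤ U.card
      have hcn : c * n ≤ U.card := by
        have h1 : (c : ℝ) / (U.card : ℝ) ≤ 1 / (n : ℝ) := by
          rw [div_eq_mul_inv]; exact hScheap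
        rw [div_le_div_iff₀ hUcR hnR, one_mul] at h1
        exact_mod_cast h1
      have hcμ : c ≤ mu0 := by
        by_contra hcon
        push_neg at hcon
        have hcon' : mu0 + 1 ≤ c := hcon
        have h1 : n * (mu0 + 1) ≤ n * c :=
          mul_le_mul_of_nonneg_left hcon' (Nat.zero_le n)
        have h2 : c * n ≤ j * (mu0 + 1) := hUc ▸ hcn
        have h3 : j * (mu0 + 1) < n * (mu0 + 1) :=
          mul_lt_mul_of_pos_right hj (by omega)
        have h5 : c * n < c * n := by
          calc c * n ≤ j * (mu0 + 1) := h2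
            _ < n * (mu0 + 1) := h3
            _ ≤ n * c := h1
            _ = c * n := Nat.mul_comm n c
        exact absurd h5 (lt_irrefl _)
      have hsplit : v S ≤ v (S ∩ U) + v (S \ U) := by
        have h6 := xos_subadd hxos (S ∩ U) (S \ U)
        rwa [show S ∩ U ∪ S \ U = S from sup_inf_sdiff S U] at h6
      have h4 : v (S ∩ U) ≤ (c : ℝ) := bm_le_card hxos hbm (S ∩ U)
      have h5 : v (S \ U) ≤ (mu0 : ℝ) :=
        le_trans (bm_mono hbm (Finset.sdiff_subset_sdiff (Finset.subset_univ S)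
          (le_refl U))) hrem
      have hcR : (c : ℝ) ≤ (mu0 : ℝ) := by exact_mod_cast hcμ
      rw [hμ]
      linarith
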